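/- arXiv:1508.05646 — 2 statements merged into one kernel-verified Lean document; each statement's English description precedes it below -/
import Mathlib

section
/- With g = Σ_n g_n (equivalently g = sup_n g_n) as above and f not a.e. zero, there exist constants 0 < C_1 ≤ C_2 such that for all p ∈ [1,4), C_1 (4-p)^{-1/4} ≤ ‖g‖_p ≤ C_2 (4-p)^{-1/4}. In particular ‖g‖_p → ∞ as p → 4⁻, so g ∉ L^4(0,1). -/
open MeasureTheory Set Filter

private lemma sub_lemma (F : ℝ → ℝ) (hFi : IntegrableOn F (Set.Ioo 0 1))
    (b D : ℝ) (hD : 0 < D) :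
    IntegrableOn (fun x => F ((x - b) / D)) (Set.Ioo b (b + D)) ∧
      ∫ x in Set.Ioo b (b + D), F ((x - b) / D) = D * ∫ x in Set.Ioo 0 1, F x := by
  set ψ : ℝ → ℝ := (Set.Ioo (0:ℝ) 1).indicator F with hψdef
  have hψ : Integrable ψ := (integrable_indicator_iff measurableSet_Ioo).2 hFi
  have key : ∀ x, (Set.Ioo b (b + D)).indicator (fun x => F ((x - b) / D)) x
      = ψ ((x - b) / D) := by
    intro x
    have hmem : x ∈ Set.Ioo b (b + D) ↔ (x - b) / D ∈ Set.Ioo (0:ℝ) 1 := by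
      constructor
      · rintro ⟨h1, h2⟩
        exact ⟨div_pos (by linarith) hD, (div_lt_one hD).2 (by linarith)⟩
      · rintro ⟨h1, h2⟩
        have h1' : 0 < x - b := by
          have := mul_pos h1 hD
          rwa [div_mul_cancel₀ _ hD.ne'] at this
        have h2' : x - b < D := (div_lt_one hD).1 h2
        exact ⟨by linarith, by linarith⟩
    by_cases hx : x ∈ Set.Ioo b (b + D)
    · rw [Set.indicator_of_mem hx, hψdef, Set.indicator_of_mem (hmem.1 hx)]
    · rw [Set.indicator_of_notMem hx, hψdef, Set.indicator_of_notMem (fun h => hx (hmem.2 h))]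
  have hcomp : Integrable (fun x => ψ ((x - b) / D)) := by
    have h1 : Integrable (fun y => ψ (y / D)) := hψ.comp_div hD.ne'
    exact h1.comp_sub_right b
  have hint : IntegrableOn (fun x => F ((x - b) / D)) (Set.Ioo b (b + D)) := by
    rw [← integrable_indicator_iff measurableSet_Ioo]
    exact hcomp.congr (Filter.Eventually.of_forall fun x => (key x).symm)
  refine ⟨hint, ?_⟩
  calc ∫ x in Set.Ioo b (b + D), F ((x - b) / D)
      = ∫ x, (Set.Ioo b (b + D)).indicator (fun x => F ((x - b) / D)) x := by
        rw [integral_indicator measurableSet_Ioo]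
    _ = ∫ x, ψ ((x - b) / D) := by simp_rw [key]
    _ = ∫ x, ψ (x / D) := by
        exact integral_sub_right_eq_self (fun y => ψ (y / D)) b
    _ = |D| • ∫ x, ψ x := Measure.integral_comp_div ψ D
    _ = D * ∫ x in Set.Ioo 0 1, F x := by
        rw [abs_of_pos hD, smul_eq_mul, hψdef, integral_indicator measurableSet_Ioo]

private lemma S_lemma (r : ℝ) (hr : 1 < r) :
    Summable (fun n : ℕ => ((n:ℝ) + 1) ^ (-r)) ∧
      1 / (r - 1) ≤ (∑' n : ℕ, ((n:ℝ) + 1) ^ (-r)) ∧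
      (∑' n : ℕ, ((n:ℝ) + 1) ^ (-r)) ≤ 1 + 1 / (r - 1) := by
  have hr1 : (0:ℝ) < r - 1 := by linarith
  set φ : ℝ → ℝ := fun x => x ^ (-r) with hφ
  have hanti : ∀ N : ℕ, AntitoneOn φ (Icc (1:ℝ) (1 + N)) := by
    intro N x hx y hy hxy
    exact Real.rpow_le_rpow_of_nonpos (lt_of_lt_of_le zero_lt_one hx.1) hxy (by linarith)
  have hIval : ∀ N : ℕ, ∫ x in (1:ℝ)..(1 + (N:ℝ)), φ x
      = (1 - (1 + (N:ℝ)) ^ (-r + 1)) / (r - 1) := by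
    intro N
    rw [hφ]
    have hne' : -r ≠ -1 := by intro h; rw [neg_inj] at h; linarith
    have h0 : (0:ℝ) ∉ Set.uIcc 1 (1 + (N:ℝ)) := by
      rw [Set.uIcc_of_le (by linarith [Nat.cast_nonneg (α := ℝ) N] : (1:ℝ) ≤ 1 + N)]
      norm_num [Set.mem_Icc]
    rw [integral_rpow (Or.inr ⟨hne', h0⟩)]
    rw [Real.one_rpow]
    have hne : -r + 1 ≠ 0 := by intro h; linarith
    field_simp
    ring
  have hnonneg : ∀ n : ℕ, (0:ℝ) ≤ ((n:ℝ) + 1) ^ (-r) := fun n =>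
    Real.rpow_nonneg (by positivity) _
  have htail_nonneg : ∀ n : ℕ, (0:ℝ) ≤ ((n:ℝ) + 2) ^ (-r) := fun n =>
    Real.rpow_nonneg (by positivity) _
  have htail_partial : ∀ N : ℕ, (∑ i ∈ Finset.range N, ((i:ℝ) + 2) ^ (-r)) ≤ 1 / (r - 1) := by
    intro N
    have h1 : (∑ i ∈ Finset.range N, φ ((1:ℝ) + ((i + 1 : ℕ) : ℝ)))
        ≤ ∫ x in (1:ℝ)..(1 + (N:ℝ)), φ x := by
      have := (hanti N).sum_le_integral
      simpa using this
    have h2 : (∑ i ∈ Finset.range N, ((i:ℝ) + 2) ^ (-r))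
        = ∑ i ∈ Finset.range N, φ ((1:ℝ) + ((i + 1 : ℕ) : ℝ)) := by
      refine Finset.sum_congr rfl fun i _ => ?_
      rw [hφ]
      push_cast
      ring_nf
    rw [h2]
    refine h1.trans ?_
    rw [hIval N]
    have hτ : 0 ≤ (1 + (N:ℝ)) ^ (-r + 1) := Real.rpow_nonneg (by positivity) _
    gcongr
    linarith
  have htail_summable : Summable (fun n : ℕ => ((n:ℝ) + 2) ^ (-r)) :=
    summable_of_sum_range_le htail_nonneg htail_partial
  have hsummable : Summable (fun n : ℕ => ((n:ℝ) + 1) ^ (-r)) := by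
    rw [← summable_nat_add_iff 1]
    refine htail_summable.congr fun n => ?_
    push_cast
    ring_nf
  refine ⟨hsummable, ?_, ?_⟩
  · have hlow : ∀ N : ℕ, (1 - (1 + (N:ℝ)) ^ (-r + 1)) / (r - 1)
        ≤ ∑' n : ℕ, ((n:ℝ) + 1) ^ (-r) := by
      intro N
      have h1 : ∫ x in (1:ℝ)..(1 + (N:ℝ)), φ x
          ≤ ∑ i ∈ Finset.range N, φ ((1:ℝ) + (i : ℝ)) := by
        have := (hanti N).integral_le_sum
        simpa using this
      have h2 : (∑ i ∈ Finset.range N, φ ((1:ℝ) + (i : ℝ)))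
          = ∑ i ∈ Finset.range N, ((i:ℝ) + 1) ^ (-r) := by
        refine Finset.sum_congr rfl fun i _ => ?_
        rw [hφ]; ring_nf
      rw [← hIval N]
      exact h1.trans (h2 ▸ Summable.sum_le_tsum (Finset.range N) (fun i _ => hnonneg i) hsummable)
    have hτ0 : Tendsto (fun N : ℕ => (1 + (N:ℝ)) ^ (-r + 1)) atTop (nhds 0) := by
      have h1 : Tendsto (fun N : ℕ => (1 + (N:ℝ))) atTop atTop :=
        tendsto_atTop_add_const_left _ _ tendsto_natCast_atTop_atTop
      have h2 : Tendsto (fun x : ℝ => x ^ (-(r - 1))) atTop (nhds 0) :=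
        tendsto_rpow_neg_atTop hr1
      have := h2.comp h1
      refine this.congr fun N => ?_
      simp only [Function.comp]
      rw [show -(r-1) = -r+1 by ring]
    have hlim : Tendsto (fun N : ℕ => (1 - (1 + (N:ℝ)) ^ (-r + 1)) / (r - 1)) atTop
        (nhds ((1 - 0) / (r - 1))) :=
      (tendsto_const_nhds.sub hτ0).div_const _
    have := le_of_tendsto' hlim hlow
    simpa using this
  · have := Summable.tsum_eq_zero_add hsummable
    rw [this]
    push_cast
    rw [show ((0:ℝ) + 1) ^ (-r) = 1 by norm_num] at *
    have hle : (∑' n : ℕ, (((n:ℝ) + 1) + 1) ^ (-r)) ≤ 1 / (r - 1) := by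
      have := Real.tsum_le_of_sum_range_le htail_nonneg htail_partial
      refine le_of_eq_of_le ?_ this
      refine tsum_congr fun n => ?_
      ring_nf
    linarith [hle]

private lemma exp_low {t p : ℝ} (ht0 : 0 < t) (ht3 : t ≤ 3) (hp : 1 ≤ p) (hp4 : p ≤ 4) :
    (3:ℝ) ^ (-(3:ℝ)/4) ≤ t ^ ((1:ℝ)/4 - 1/p) := by
  have hp0 : 0 < p := by linarith
  have hinv : 1/p ≤ 1 := by rw [div_le_one hp0]; linarith
  have hinv4 : (1:ℝ)/4 ≤ 1/p := by
    rw [div_le_div_iff₀ (by norm_num) hp0]; linarith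
  rcases le_or_gt t 1 with h | h
  · have h1 : (1:ℝ) ≤ t ^ ((1:ℝ)/4 - 1/p) :=
      Real.one_le_rpow_of_pos_of_le_one_of_nonpos ht0 h (by linarith)
    have h2 : (3:ℝ) ^ (-(3:ℝ)/4) ≤ 1 :=
      Real.rpow_le_one_of_one_le_of_nonpos (by norm_num) (by norm_num)
    linarith
  · have h1 : t ^ (-(3:ℝ)/4) ≤ t ^ ((1:ℝ)/4 - 1/p) :=
      Real.rpow_le_rpow_of_exponent_le h.le (by linarith)
    have h2 : (3:ℝ) ^ (-(3:ℝ)/4) ≤ t ^ (-(3:ℝ)/4) :=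
      Real.rpow_le_rpow_of_nonpos ht0 ht3 (by norm_num)
    linarith

private lemma exp_up {t p : ℝ} (ht0 : 0 < t) (hp : 1 ≤ p) (hpt : t = 4 - p) :
    t ^ ((1:ℝ)/4 - 1/p) ≤ 2 := by
  have hp0 : 0 < p := by linarith
  have hinv : 1/p ≤ 1 := by rw [div_le_one hp0]; linarith
  rcases le_or_gt 1 t with h | h
  · have he : (1:ℝ)/4 - 1/p ≤ 0 := by
      have : (1:ℝ)/4 ≤ 1/p := by
        rw [div_le_div_iff₀ (by norm_num) hp0]; linarith
      linarith
    have := Real.rpow_le_one_of_one_le_of_nonpos h he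
    linarith
  · have hlogt : Real.log t ≤ 0 := Real.log_nonpos ht0.le h.le
    have hsq : Real.log (t ^ (-(1:ℝ)/2)) = (-(1:ℝ)/2) * Real.log t := Real.log_rpow ht0 _
    have hpos : (0:ℝ) < t ^ (-(1:ℝ)/2) := Real.rpow_pos_of_pos ht0 _
    have hlb : Real.log (t ^ (-(1:ℝ)/2)) ≤ t ^ (-(1:ℝ)/2) := by
      have := Real.log_le_sub_one_of_pos hpos
      linarith
    have hneg : -Real.log t ≤ 2 * t ^ (-(1:ℝ)/2) := by
      rw [hsq] at hlb; linarith
    have he : (1:ℝ)/4 - 1/p = -t/(4*p) := by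
      field_simp
      linarith [hpt]
    have hexp : ((1:ℝ)/4 - 1/p) * Real.log t ≤ 1/2 := by
      rw [he]
      have h1 : -t/(4*p) * Real.log t = (t/(4*p)) * (-Real.log t) := by ring
      rw [h1]
      have h2 : (t/(4*p)) * (-Real.log t) ≤ (t/4) * (2 * t ^ (-(1:ℝ)/2)) := by
        apply mul_le_mul
        · rw [div_le_div_iff₀ (by positivity) (by norm_num)]
          nlinarith
        · exact hneg
        · linarith
        · positivity
      have h3 : (t/4) * (2 * t ^ (-(1:ℝ)/2)) = 1/2 * (t ^ (1:ℝ) * t ^ (-(1:ℝ)/2)) := by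
        rw [Real.rpow_one]; ring
      have h4 : t ^ (1:ℝ) * t ^ (-(1:ℝ)/2) = t ^ ((1:ℝ)/2) := by
        rw [← Real.rpow_add ht0]; norm_num
      have h5 : t ^ ((1:ℝ)/2) ≤ 1 := Real.rpow_le_one ht0.le h.le (by norm_num)
      calc t/(4*p) * -Real.log t ≤ t/4 * (2 * t ^ (-(1:ℝ)/2)) := h2
        _ = 1/2 * (t ^ (1:ℝ) * t ^ (-(1:ℝ)/2)) := h3
        _ = 1/2 * t ^ ((1:ℝ)/2) := by rw [h4]
        _ ≤ 1/2 := by linarith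
    calc t ^ ((1:ℝ)/4 - 1/p) = Real.exp (((1:ℝ)/4 - 1/p) * Real.log t) := by
          rw [Real.rpow_def_of_pos ht0, mul_comm]
      _ ≤ Real.exp (1/2) := Real.exp_le_exp.2 hexp
      _ ≤ 2 := by
          have h2 : Real.exp (1/2) * Real.exp (1/2) = Real.exp 1 := by
            rw [← Real.exp_add]; norm_num
          nlinarith [Real.exp_one_lt_d9, Real.exp_pos (1/2:ℝ)]

private lemma rpow_inv_le {A p : ℝ} (hA : 0 < A) (hp : 1 ≤ p) :
    min A 1 ≤ A ^ ((1:ℝ)/p) ∧ A ^ ((1:ℝ)/p) ≤ max A 1 := by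
  have hp0 : 0 < p := by linarith
  have hinv : 1/p ≤ 1 := by rw [div_le_one hp0]; linarith
  have hinv0 : 0 ≤ 1/p := by positivity
  rcases le_or_gt A 1 with h | h
  · constructor
    · have : A ^ (1:ℝ) ≤ A ^ ((1:ℝ)/p) := Real.rpow_le_rpow_of_exponent_ge hA h hinv
      rw [Real.rpow_one] at this
      exact (min_le_left _ _).trans this
    · exact (Real.rpow_le_one hA.le h hinv0).trans (le_max_right _ _)
  · constructor
    · have : A ^ (0:ℝ) ≤ A ^ ((1:ℝ)/p) := Real.rpow_le_rpow_of_exponent_le h.le hinv0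
      rw [Real.rpow_zero] at this
      exact (min_le_right _ _).trans this
    · have : A ^ ((1:ℝ)/p) ≤ A ^ (1:ℝ) := Real.rpow_le_rpow_of_exponent_le h.le hinv
      rw [Real.rpow_one] at this
      exact this.trans (le_max_left _ _)

set_option maxHeartbeats 2000000 in
/-- `‖g‖_p ≍ (4-p)^{-1/4}` for `p ∈ [1,4)`; in particular `g ∉ L⁴(0,1)`. -/
theorem stmt_7
    (β Cβ : ℝ) (hβ : 0 < β)
    (f : ℝ → ℝ) (hf_meas : Measurable f) (hf_nonneg : ∀ x, 0 ≤ f x)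
    (hf4 : MeasureTheory.IntegrableOn (fun x => |f x| ^ (4 : ℝ)) (Set.Ioo 0 1))
    (Δ a c : ℕ → ℝ)
    (hΔ : ∀ n, 1 ≤ n → Δ n = Cβ * (n : ℝ) ^ (-(4 * β) - 1))
    (hsum : ∑' n : ℕ, Δ (n + 1) = 1)
    (ha : ∀ n, 1 ≤ n → a n = ∑' m : ℕ, Δ (n + m))
    (hc : ∀ n, c n = (n : ℝ) ^ β)
    (g : ℕ → ℝ → ℝ)
    (hg : ∀ n x, g n x =
      Set.indicator (Set.Ioo (a (n + 1)) (a n))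
        (fun y => c n * f ((y - a (n + 1)) / Δ n)) x)
    (hf_ne : ¬ f =ᵐ[volume.restrict (Set.Ioo (0 : ℝ) 1)] 0) :
    ∃ C₁ C₂ : ℝ, 0 < C₁ ∧ C₁ ≤ C₂ ∧
      (∀ p ∈ Set.Ico (1 : ℝ) 4,
        C₁ * (4 - p) ^ (-(1 : ℝ) / 4)
            ≤ (∫ x in Set.Ioo (0 : ℝ) 1, (∑' n : ℕ, g (n + 1) x) ^ p) ^ (1 / p) ∧
        (∫ x in Set.Ioo (0 : ℝ) 1, (∑' n : ℕ, g (n + 1) x) ^ p) ^ (1 / p)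
            ≤ C₂ * (4 - p) ^ (-(1 : ℝ) / 4)) ∧
      ¬ MemLp (fun x => ∑' n : ℕ, g (n + 1) x) 4
          (volume.restrict (Set.Ioo (0 : ℝ) 1)) := by
  classical
  -- summability of Δ
  have hSum1 : Summable (fun n : ℕ => Δ (n+1)) := by
    by_contra hcon
    rw [tsum_eq_zero_of_not_summable hcon] at hsum
    norm_num at hsum
  have hCβ : 0 < Cβ := by
    by_contra hcon
    push_neg at hcon
    have h1 : ∀ n : ℕ, Δ (n+1) ≤ 0 := fun n => by
      rw [hΔ (n+1) (by omega)]
      have h2 : (0:ℝ) < ((n+1:ℕ):ℝ) ^ (-(4*β)-1) :=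
        Real.rpow_pos_of_pos (by positivity) _
      exact mul_nonpos_of_nonpos_of_nonneg hcon h2.le
    have := tsum_nonpos (L := SummationFilter.unconditional ℕ) h1
    rw [hsum] at this
    norm_num at this
  have hΔpos : ∀ n : ℕ, 1 ≤ n → 0 < Δ n := fun n hn => by
    rw [hΔ n hn]
    exact mul_pos hCβ (Real.rpow_pos_of_pos (by exact_mod_cast Nat.pos_of_ne_zero (by omega)) _)
  have hSumShift : ∀ n : ℕ, 1 ≤ n → Summable (fun m : ℕ => Δ (n + m)) := by
    intro n hn
    obtain ⟨k, rfl⟩ : ∃ k, n = k + 1 := ⟨n - 1, by omega⟩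
    have h1 : Summable (fun m : ℕ => Δ (m + k + 1)) :=
      (summable_nat_add_iff (f := fun j => Δ (j + 1)) k).2 hSum1
    exact h1.congr fun m => congrArg Δ (by omega)
  have harec : ∀ n : ℕ, 1 ≤ n → a n = Δ n + a (n+1) := by
    intro n hn
    rw [ha n hn, ha (n+1) (by omega)]
    have h2 : (∑' k : ℕ, Δ (n + (k+1))) = ∑' m : ℕ, Δ (n + 1 + m) :=
      tsum_congr fun k => congrArg Δ (by omega)
    rw [Summable.tsum_eq_zero_add (hSumShift n hn), h2, Nat.add_zero]
  have hapos : ∀ n : ℕ, 1 ≤ n → 0 < a n := by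
    intro n hn
    rw [ha n hn]
    have h1 : Δ (n + 0) ≤ ∑' m : ℕ, Δ (n + m) :=
      Summable.le_tsum (hSumShift n hn) 0 (fun j _ => (hΔpos (n+j) (by omega)).le)
    have h2 : 0 < Δ (n + 0) := hΔpos (n+0) (by omega)
    linarith
  have ha1 : a 1 = 1 := by
    rw [ha 1 le_rfl, ← hsum]
    exact tsum_congr fun m => congrArg Δ (by omega)
  have hstep : ∀ n : ℕ, 1 ≤ n → a (n+1) < a n := fun n hn => by
    have h1 := harec n hn
    have h2 := hΔpos n hn
    linarith
  have hmono : ∀ m n : ℕ, 1 ≤ m → m ≤ n → a n ≤ a m := by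
    intro m n hm hmn
    induction n, hmn using Nat.le_induction with
    | base => exact le_rfl
    | succ n hmn ih => exact ((hstep n (hm.trans hmn)).le).trans ih
  have halt1 : ∀ n : ℕ, 1 ≤ n → a n ≤ 1 := fun n hn => ha1 ▸ hmono 1 n le_rfl hn
  set I : ℕ → Set ℝ := fun N => Set.Ioo (a (N+2)) (a (N+1)) with hI
  have hImeas : ∀ N, MeasurableSet (I N) := fun N => measurableSet_Ioo
  have hIsub : ∀ N, I N ⊆ Set.Ioo (0:ℝ) 1 := by
    intro N x hx
    exact ⟨lt_trans (hapos (N+2) (by omega)) hx.1,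
      lt_of_lt_of_le hx.2 (halt1 (N+1) (by omega))⟩
  have hIdisj : Pairwise (Function.onFun Disjoint I) := by
    have key : ∀ N M, N < M → Disjoint (I N) (I M) := by
      intro N M hlt
      rw [Set.disjoint_left]
      intro x hxN hxM
      have h1 : a (M+1) ≤ a (N+2) := hmono (N+2) (M+1) (by omega) (by omega)
      have := hxN.1
      have := hxM.2
      simp only [hI, Set.mem_Ioo] at hxN hxM
      linarith [hxN.1, hxM.2]
    intro N M hNM
    rcases lt_or_gt_of_ne hNM with h | h
    · exact key N M h
    · exact (key M N h).symm
  have hcnn : ∀ n : ℕ, 0 ≤ c n := fun n => by rw [hc]; positivity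
  have hU : ∀ x, x ∉ (⋃ N, I N) → (∑' n : ℕ, g (n+1) x) = 0 := by
    intro x hx
    have h1 : ∀ n : ℕ, g (n+1) x = 0 := by
      intro n
      rw [hg]
      apply Set.indicator_of_notMem
      exact fun hmem => hx (Set.mem_iUnion.2 ⟨n, hmem⟩)
    rw [tsum_congr h1, tsum_zero]
  have hval : ∀ N x, x ∈ I N → (∑' n : ℕ, g (n+1) x) = c (N+1) * f ((x - a (N+2)) / Δ (N+1)) := by
    intro N x hx
    rw [tsum_eq_single N ?_]
    · rw [hg]
      exact Set.indicator_of_mem hx _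
    · intro n hn
      rw [hg]
      apply Set.indicator_of_notMem
      intro hmem
      exact Set.disjoint_left.1 (hIdisj hn) hmem hx
  have hnonneg_h : ∀ x, 0 ≤ (∑' n : ℕ, g (n+1) x) := fun x =>
    tsum_nonneg fun n => by
      rw [hg]
      exact Set.indicator_nonneg (fun y _ => mul_nonneg (hcnn _) (hf_nonneg _)) x
  have hIeq : ∀ N : ℕ, I N = Set.Ioo (a (N+2)) (a (N+2) + Δ (N+1)) := by
    intro N
    simp only [hI]
    have h1 := harec (N+1) (by omega)
    rw [show N+1+1 = N+2 from rfl] at h1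
    rw [h1, add_comm (Δ (N+1)) (a (N+2))]
  -- integrability facts for f
  have hf4' : IntegrableOn (fun x => f x ^ (4:ℝ)) (Set.Ioo 0 1) := by
    have heq : (fun x : ℝ => |f x| ^ (4:ℝ)) = fun x => f x ^ (4:ℝ) :=
      funext fun x => by rw [abs_of_nonneg (hf_nonneg x)]
    rwa [heq] at hf4
  have hdom : ∀ p : ℝ, 1 ≤ p → p ≤ 4 → ∀ y : ℝ, 0 ≤ y → y ^ p ≤ 1 + y ^ (4:ℝ) := by
    intro p hp1 hp4' y hy
    rcases le_or_gt y 1 with h | h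
    · have h1 : y ^ p ≤ 1 := Real.rpow_le_one hy h (by linarith)
      have h2 : 0 ≤ y ^ (4:ℝ) := Real.rpow_nonneg hy _
      linarith
    · have h1 : y ^ p ≤ y ^ (4:ℝ) := Real.rpow_le_rpow_of_exponent_le h.le hp4'
      linarith
  have hconst_int : IntegrableOn (fun _ : ℝ => (1:ℝ)) (Set.Ioo 0 1) volume := by
    refine integrableOn_const ?_ (by simp)
    rw [Real.volume_Ioo]
    norm_num
  have hone_plus : IntegrableOn (fun x => 1 + f x ^ (4:ℝ)) (Set.Ioo 0 1) := hconst_int.add hf4'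
  have hfp_meas : ∀ p : ℝ, 0 ≤ p → Measurable (fun x => f x ^ p) := fun p hp =>
    (Real.continuous_rpow_const hp).measurable.comp hf_meas
  have hfp_int : ∀ p : ℝ, 1 ≤ p → p ≤ 4 → IntegrableOn (fun x => f x ^ p) (Set.Ioo 0 1) := by
    intro p hp1 hp4'
    apply Integrable.mono' hone_plus ((hfp_meas p (by linarith)).aestronglyMeasurable)
    filter_upwards with x
    rw [Real.norm_eq_abs, abs_of_nonneg (Real.rpow_nonneg (hf_nonneg x) p)]
    exact hdom p hp1 hp4' (f x) (hf_nonneg x)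
  -- K and its bounds
  set K : ℝ → ℝ := fun p => ∫ x in Set.Ioo (0:ℝ) 1, f x ^ p with hK
  set K4 : ℝ := ∫ x in Set.Ioo (0:ℝ) 1, f x ^ (4:ℝ) with hK4
  have hK4nn : 0 ≤ K4 := setIntegral_nonneg measurableSet_Ioo
    (fun x _ => Real.rpow_nonneg (hf_nonneg x) _)
  have hint_one : (∫ _x in Set.Ioo (0:ℝ) 1, (1:ℝ)) = 1 := by
    rw [setIntegral_const]
    rw [Real.volume_real_Ioo]
    norm_num
  have hKup : ∀ p : ℝ, 1 ≤ p → p ≤ 4 → K p ≤ 1 + K4 := by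
    intro p hp1 hp4'
    have h1 : K p ≤ ∫ x in Set.Ioo (0:ℝ) 1, (1 + f x ^ (4:ℝ)) :=
      setIntegral_mono_on (hfp_int p hp1 hp4') hone_plus measurableSet_Ioo
        (fun x _ => hdom p hp1 hp4' (f x) (hf_nonneg x))
    have h2 : (∫ x in Set.Ioo (0:ℝ) 1, (1 + f x ^ (4:ℝ))) = 1 + K4 := by
      rw [integral_add hconst_int hf4', hint_one, hK4]
    linarith
  have hmnn : ∀ x : ℝ, 0 ≤ min (f x) 1 := fun x => le_min (hf_nonneg x) zero_le_one
  set K₀ : ℝ := ∫ x in Set.Ioo (0:ℝ) 1, (min (f x) 1) ^ (4:ℝ) with hK₀def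
  have hm_meas : Measurable (fun x : ℝ => (min (f x) 1) ^ (4:ℝ)) :=
    (Real.continuous_rpow_const (by norm_num)).measurable.comp (hf_meas.min measurable_const)
  have hm_int : IntegrableOn (fun x => (min (f x) 1) ^ (4:ℝ)) (Set.Ioo 0 1) := by
    apply Integrable.mono' hconst_int hm_meas.aestronglyMeasurable
    filter_upwards with x
    rw [Real.norm_eq_abs, abs_of_nonneg (Real.rpow_nonneg (hmnn x) _)]
    exact Real.rpow_le_one (hmnn x) (min_le_right _ _) (by norm_num)
  have hK₀pos : 0 < K₀ := by
    rcases lt_or_ge 0 K₀ with h | h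
    · exact h
    have hge : 0 ≤ K₀ := setIntegral_nonneg measurableSet_Ioo
      (fun x _ => Real.rpow_nonneg (hmnn x) _)
    have hzero : K₀ = 0 := le_antisymm h hge
    exfalso
    apply hf_ne
    have hae := (integral_eq_zero_iff_of_nonneg
      (μ := volume.restrict (Set.Ioo (0:ℝ) 1))
      (f := fun x => (min (f x) 1) ^ (4:ℝ))
      (fun x => Real.rpow_nonneg (hmnn x) _) hm_int).1 hzero
    filter_upwards [hae] with x hx
    simp only [Pi.zero_apply] at hx ⊢
    have hmin : min (f x) 1 = 0 := by
      by_contra hne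
      exact hne (by
        have := Real.rpow_eq_zero_iff_of_nonneg (hmnn x) |>.1 hx
        exact this.1)
    rcases le_or_gt (f x) 1 with hle | hlt
    · rwa [min_eq_left hle] at hmin
    · rw [min_eq_right hlt.le] at hmin
      norm_num at hmin
  have hKlow : ∀ p : ℝ, 1 ≤ p → p ≤ 4 → K₀ ≤ K p := by
    intro p hp1 hp4'
    apply setIntegral_mono_on hm_int (hfp_int p hp1 hp4') measurableSet_Ioo
    intro x _
    rcases le_or_gt 1 (f x) with h | h
    · rw [min_eq_right h, Real.one_rpow]
      have h1 : f x ^ (0:ℝ) ≤ f x ^ p := Real.rpow_le_rpow_of_exponent_le h (by linarith)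
      rwa [Real.rpow_zero] at h1
    · rw [min_eq_left h.le]
      rcases eq_or_lt_of_le (hf_nonneg x) with h0 | h0
      · rw [← h0, Real.zero_rpow (by norm_num : (4:ℝ) ≠ 0),
          Real.zero_rpow (by linarith : p ≠ 0)]
      · exact Real.rpow_le_rpow_of_exponent_ge h0 h.le hp4'
  -- main integral formula
  have hmain : ∀ p : ℝ, 1 ≤ p → p < 4 →
      IntegrableOn (fun x => (∑' n : ℕ, g (n+1) x) ^ p) (Set.Ioo (0:ℝ) 1) ∧
      (∫ x in Set.Ioo (0:ℝ) 1, (∑' n : ℕ, g (n+1) x) ^ p)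
        = Cβ * K p * ∑' n : ℕ, ((n:ℝ) + 1) ^ (-(4*β + 1 - p*β)) := by
    intro p hp1 hp4'
    set r : ℝ := 4*β + 1 - p*β with hrdef
    have hr : 1 < r := by nlinarith
    have hGN : ∀ N : ℕ,
        IntegrableOn (fun x => c (N+1) ^ p * f ((x - a (N+2)) / Δ (N+1)) ^ p) (I N) ∧
        (∫ x in I N, c (N+1) ^ p * f ((x - a (N+2)) / Δ (N+1)) ^ p)
          = c (N+1) ^ p * (Δ (N+1) * K p) := by
      intro N
      have hD := hΔpos (N+1) (by omega)
      have hsub := sub_lemma (fun y => f y ^ p) (hfp_int p hp1 (by linarith))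
        (a (N+2)) (Δ (N+1)) hD
      rw [← hIeq N] at hsub
      constructor
      · exact hsub.1.const_mul _
      · rw [integral_const_mul, hsub.2, hK]
    have hcval : ∀ N : ℕ, c (N+1) ^ p * (Δ (N+1) * K p) = Cβ * K p * ((N:ℝ) + 1) ^ (-r) := by
      intro N
      have hNpos : (0:ℝ) < ((N+1:ℕ):ℝ) := by positivity
      rw [hc, hΔ (N+1) (by omega)]
      have h1 : (((N+1:ℕ):ℝ) ^ β) ^ p = ((N+1:ℕ):ℝ) ^ (β * p) := (Real.rpow_mul hNpos.le β p).symm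
      rw [h1]
      have h2 : ((N+1:ℕ):ℝ) ^ (β * p) * ((N+1:ℕ):ℝ) ^ (-(4*β) - 1)
          = ((N+1:ℕ):ℝ) ^ (-r) := by
        rw [← Real.rpow_add hNpos]
        congr 1
        rw [hrdef]; ring
      have h3 : (((N+1):ℕ):ℝ) = (N:ℝ) + 1 := by push_cast; ring
      calc ((N+1:ℕ):ℝ) ^ (β*p) * (Cβ * ((N+1:ℕ):ℝ) ^ (-(4*β) - 1) * K p)
          = Cβ * K p * (((N+1:ℕ):ℝ) ^ (β*p) * ((N+1:ℕ):ℝ) ^ (-(4*β) - 1)) := by ring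
        _ = Cβ * K p * ((N:ℝ) + 1) ^ (-r) := by rw [h2, h3]
    have hSr := S_lemma r hr
    have hsumval : Summable (fun N : ℕ => Cβ * K p * ((N:ℝ) + 1) ^ (-r)) := hSr.1.mul_left _
    have hEnn : ∀ x, 0 ≤ (∑' n : ℕ, g (n+1) x) ^ p := fun x =>
      Real.rpow_nonneg (hnonneg_h x) p
    have hEeq : ∀ N : ℕ, Set.EqOn (fun x => c (N+1) ^ p * f ((x - a (N+2)) / Δ (N+1)) ^ p)
        (fun x => (∑' n : ℕ, g (n+1) x) ^ p) (I N) := by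
      intro N x hx
      simp only
      rw [hval N x hx, Real.mul_rpow (hcnn _) (hf_nonneg _)]
    have hEint : ∀ N, IntegrableOn (fun x => (∑' n : ℕ, g (n+1) x) ^ p) (I N) := fun N =>
      ((hGN N).1).congr_fun (hEeq N) (hImeas N)
    have hEval : ∀ N, (∫ x in I N, (∑' n : ℕ, g (n+1) x) ^ p)
        = Cβ * K p * ((N:ℝ) + 1) ^ (-r) := fun N => by
      rw [← setIntegral_congr_fun (hImeas N) (hEeq N), (hGN N).2, hcval N]
    have hnorm : ∀ N, (∫ x in I N, ‖(∑' n : ℕ, g (n+1) x) ^ p‖)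
        = Cβ * K p * ((N:ℝ) + 1) ^ (-r) := fun N => by
      rw [← hEval N]
      congr 1
      funext x
      rw [Real.norm_eq_abs, abs_of_nonneg (hEnn x)]
    have hUint : IntegrableOn (fun x => (∑' n : ℕ, g (n+1) x) ^ p) (⋃ N, I N) :=
      integrableOn_iUnion_of_summable_integral_norm hEint
        (hsumval.congr fun N => (hnorm N).symm)
    have hEzero : ∀ x, x ∉ (⋃ N, I N) → (∑' n : ℕ, g (n+1) x) ^ p = 0 := fun x hx => by
      rw [hU x hx, Real.zero_rpow (by linarith : p ≠ 0)]
    have hsubU : (⋃ N, I N) ⊆ Set.Ioo (0:ℝ) 1 := Set.iUnion_subset hIsub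
    have hind : (Set.Ioo (0:ℝ) 1).indicator (fun x => (∑' n : ℕ, g (n+1) x) ^ p)
        = (⋃ N, I N).indicator (fun x => (∑' n : ℕ, g (n+1) x) ^ p) := by
      funext x
      by_cases hx : x ∈ ⋃ N, I N
      · rw [Set.indicator_of_mem hx, Set.indicator_of_mem (hsubU hx)]
      · rw [Set.indicator_of_notMem hx]
        by_cases hx2 : x ∈ Set.Ioo (0:ℝ) 1
        · rw [Set.indicator_of_mem hx2, hEzero x hx]
        · rw [Set.indicator_of_notMem hx2]
    have hint01 : IntegrableOn (fun x => (∑' n : ℕ, g (n+1) x) ^ p) (Set.Ioo (0:ℝ) 1) := by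
      rw [← integrable_indicator_iff measurableSet_Ioo, hind,
        integrable_indicator_iff (MeasurableSet.iUnion hImeas)]
      exact hUint
    refine ⟨hint01, ?_⟩
    calc (∫ x in Set.Ioo (0:ℝ) 1, (∑' n : ℕ, g (n+1) x) ^ p)
        = ∫ x, (Set.Ioo (0:ℝ) 1).indicator (fun x => (∑' n : ℕ, g (n+1) x) ^ p) x := by
          rw [integral_indicator measurableSet_Ioo]
      _ = ∫ x, (⋃ N, I N).indicator (fun x => (∑' n : ℕ, g (n+1) x) ^ p) x := by rw [hind]
      _ = ∫ x in ⋃ N, I N, (∑' n : ℕ, g (n+1) x) ^ p := by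
          rw [integral_indicator (MeasurableSet.iUnion hImeas)]
      _ = ∑' N, ∫ x in I N, (∑' n : ℕ, g (n+1) x) ^ p :=
          integral_iUnion hImeas hIdisj hUint
      _ = ∑' N : ℕ, Cβ * K p * ((N:ℝ) + 1) ^ (-r) := tsum_congr hEval
      _ = Cβ * K p * ∑' N : ℕ, ((N:ℝ) + 1) ^ (-r) := tsum_mul_left
  -- constants
  set A : ℝ := Cβ * K₀ / β with hAdef
  set B : ℝ := Cβ * (1 + K4) * (3*β + 1) / β with hBdef
  have hA : 0 < A := div_pos (mul_pos hCβ hK₀pos) hβ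
  have hB : 0 < B := div_pos (mul_pos (mul_pos hCβ (by linarith)) (by linarith)) hβ
  set C₁ : ℝ := min A 1 * 3 ^ (-(3:ℝ)/4) with hC₁def
  set C₂ : ℝ := 2 * max B 1 with hC₂def
  have h3pow_pos : (0:ℝ) < 3 ^ (-(3:ℝ)/4) := Real.rpow_pos_of_pos (by norm_num) _
  have h3pow_le1 : (3:ℝ) ^ (-(3:ℝ)/4) ≤ 1 :=
    Real.rpow_le_one_of_one_le_of_nonpos (by norm_num) (by norm_num)
  have hC₁pos : 0 < C₁ := mul_pos (lt_min hA one_pos) h3pow_pos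
  have hC₁₂ : C₁ ≤ C₂ := by
    have h1 : C₁ ≤ 1 := by
      calc C₁ ≤ 1 * 1 :=
            mul_le_mul (min_le_right _ _) h3pow_le1 h3pow_pos.le (by norm_num)
        _ = 1 := by norm_num
    have h2 : (1:ℝ) ≤ C₂ := by
      have h3 := le_max_right B 1
      rw [hC₂def]; nlinarith
    linarith
  -- key bounds for each p
  have key : ∀ p : ℝ, 1 ≤ p → p < 4 →
      C₁ * (4 - p) ^ (-(1:ℝ)/4)
        ≤ (∫ x in Set.Ioo (0:ℝ) 1, (∑' n : ℕ, g (n+1) x) ^ p) ^ (1/p) ∧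
      (∫ x in Set.Ioo (0:ℝ) 1, (∑' n : ℕ, g (n+1) x) ^ p) ^ (1/p)
        ≤ C₂ * (4 - p) ^ (-(1:ℝ)/4) := by
    intro p hp1 hp4'
    have ht0 : 0 < 4 - p := by linarith
    have ht3 : 4 - p ≤ 3 := by linarith
    have hr : 1 < 4*β + 1 - p*β := by nlinarith
    have hrm1 : 4*β + 1 - p*β - 1 = (4 - p) * β := by ring
    obtain ⟨hint01, hintval⟩ := hmain p hp1 hp4'
    have hSr := S_lemma _ hr
    set S : ℝ := ∑' n : ℕ, ((n:ℝ)+1) ^ (-(4*β + 1 - p*β)) with hSdef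
    have htβ : 0 < (4 - p) * β := mul_pos ht0 hβ
    have hSlow : 1/((4 - p)*β) ≤ S := by rw [← hrm1]; exact hSr.2.1
    have hSup : S ≤ (3*β+1)/((4 - p)*β) := by
      have h1 := hSr.2.2
      rw [hrm1] at h1
      have h2 : 1 + 1/((4 - p)*β) ≤ (3*β+1)/((4 - p)*β) := by
        rw [le_div_iff₀ htβ, add_mul, one_mul, div_mul_cancel₀ _ htβ.ne']
        nlinarith
      linarith
    have hKplow := hKlow p hp1 (by linarith)
    have hKpup := hKup p hp1 (by linarith)
    have hKppos : 0 < K p := lt_of_lt_of_le hK₀pos hKplow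
    have hSpos : 0 < S := lt_of_lt_of_le (by positivity) hSlow
    have hYlow : A / (4 - p) ≤ Cβ * K p * S := by
      have h1 : Cβ * K₀ * (1/((4 - p)*β)) ≤ Cβ * K p * S :=
        mul_le_mul (mul_le_mul le_rfl hKplow hK₀pos.le hCβ.le) hSlow (by positivity)
          (mul_nonneg hCβ.le hKppos.le)
      have h2 : A / (4 - p) = Cβ * K₀ * (1/((4 - p)*β)) := by
        rw [hAdef]; field_simp
      linarith
    have hYup : Cβ * K p * S ≤ B / (4 - p) := by
      have h1 : Cβ * K p * S ≤ Cβ * (1 + K4) * ((3*β+1)/((4 - p)*β)) :=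
        mul_le_mul (mul_le_mul le_rfl hKpup hKppos.le hCβ.le) hSup hSpos.le
          (mul_nonneg hCβ.le (by linarith))
      have h2 : Cβ * (1 + K4) * ((3*β+1)/((4 - p)*β)) = B / (4 - p) := by
        rw [hBdef]; field_simp
      linarith
    have hsplit : (4 - p) ^ (-(1:ℝ)/p)
        = (4 - p) ^ ((1:ℝ)/4 - 1/p) * (4 - p) ^ (-(1:ℝ)/4) := by
      rw [← Real.rpow_add ht0]; congr 1; ring
    have hp0 : (0:ℝ) < p := by linarith
    have hinvp : (0:ℝ) ≤ 1/p := by positivity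
    constructor
    · have h1 : (A / (4 - p)) ^ ((1:ℝ)/p) ≤ (Cβ * K p * S) ^ ((1:ℝ)/p) :=
        Real.rpow_le_rpow (div_nonneg hA.le ht0.le) hYlow hinvp
      rw [hintval]
      refine le_trans ?_ h1
      have hdiv : (A / (4 - p)) ^ ((1:ℝ)/p) = A ^ ((1:ℝ)/p) * (4 - p) ^ (-(1:ℝ)/p) := by
        rw [Real.div_rpow hA.le ht0.le, div_eq_mul_inv,
          show (-(1:ℝ)/p) = -((1:ℝ)/p) by ring, Real.rpow_neg ht0.le]
      rw [hdiv, hsplit]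
      have e1 : min A 1 ≤ A ^ ((1:ℝ)/p) := (rpow_inv_le hA hp1).1
      have e2 : (3:ℝ) ^ (-(3:ℝ)/4) ≤ (4 - p) ^ ((1:ℝ)/4 - 1/p) :=
        exp_low ht0 ht3 hp1 (by linarith)
      calc C₁ * (4 - p) ^ (-(1:ℝ)/4)
          = (min A 1 * 3 ^ (-(3:ℝ)/4)) * (4 - p) ^ (-(1:ℝ)/4) := by rw [hC₁def]
        _ ≤ (A ^ ((1:ℝ)/p) * (4 - p) ^ ((1:ℝ)/4 - 1/p)) * (4 - p) ^ (-(1:ℝ)/4) := by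
            apply mul_le_mul_of_nonneg_right ?_ (Real.rpow_nonneg ht0.le _)
            exact mul_le_mul e1 e2 h3pow_pos.le (Real.rpow_nonneg hA.le _)
        _ = A ^ ((1:ℝ)/p) * ((4 - p) ^ ((1:ℝ)/4 - 1/p) * (4 - p) ^ (-(1:ℝ)/4)) := by ring
    · have h1 : (Cβ * K p * S) ^ ((1:ℝ)/p) ≤ (B / (4 - p)) ^ ((1:ℝ)/p) :=
        Real.rpow_le_rpow (mul_nonneg (mul_nonneg hCβ.le hKppos.le) hSpos.le) hYup hinvp
      rw [hintval]
      refine h1.trans ?_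
      have hdiv : (B / (4 - p)) ^ ((1:ℝ)/p) = B ^ ((1:ℝ)/p) * (4 - p) ^ (-(1:ℝ)/p) := by
        rw [Real.div_rpow hB.le ht0.le, div_eq_mul_inv,
          show (-(1:ℝ)/p) = -((1:ℝ)/p) by ring, Real.rpow_neg ht0.le]
      rw [hdiv, hsplit]
      have e1 : B ^ ((1:ℝ)/p) ≤ max B 1 := (rpow_inv_le hB hp1).2
      have e2 : (4 - p) ^ ((1:ℝ)/4 - 1/p) ≤ 2 := exp_up ht0 hp1 rfl
      calc B ^ ((1:ℝ)/p) * ((4 - p) ^ ((1:ℝ)/4 - 1/p) * (4 - p) ^ (-(1:ℝ)/4))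
          = (B ^ ((1:ℝ)/p) * (4 - p) ^ ((1:ℝ)/4 - 1/p)) * (4 - p) ^ (-(1:ℝ)/4) := by ring
        _ ≤ (max B 1 * 2) * (4 - p) ^ (-(1:ℝ)/4) := by
            apply mul_le_mul_of_nonneg_right ?_ (Real.rpow_nonneg ht0.le _)
            exact mul_le_mul e1 e2 (Real.rpow_nonneg ht0.le _)
              (le_trans hB.le (le_max_left _ _))
        _ = C₂ * (4 - p) ^ (-(1:ℝ)/4) := by rw [hC₂def]; ring
  refine ⟨C₁, C₂, hC₁pos, hC₁₂, fun p hp => key p hp.1 hp.2, ?_⟩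
  -- not Memℒp at 4
  intro hm
  have hm4 := hm.integrable_norm_rpow (by norm_num) (by norm_num)
  have hm4' : IntegrableOn (fun x => (∑' n : ℕ, g (n+1) x) ^ (4:ℝ)) (Set.Ioo (0:ℝ) 1) := by
    have heq : (fun x => ‖∑' n : ℕ, g (n+1) x‖ ^ ((4:ENNReal)).toReal)
        = fun x => (∑' n : ℕ, g (n+1) x) ^ (4:ℝ) := by
      funext x
      rw [Real.norm_eq_abs, abs_of_nonneg (hnonneg_h x)]
      norm_num
    rwa [heq] at hm4
  set M : ℝ := 1 + ∫ x in Set.Ioo (0:ℝ) 1, (∑' n : ℕ, g (n+1) x) ^ (4:ℝ) with hMdef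
  have hM1 : 1 ≤ M := by
    have h0 : 0 ≤ ∫ x in Set.Ioo (0:ℝ) 1, (∑' n : ℕ, g (n+1) x) ^ (4:ℝ) :=
      setIntegral_nonneg measurableSet_Ioo (fun x _ => Real.rpow_nonneg (hnonneg_h x) _)
    rw [hMdef]; linarith
  have hple : ∀ p : ℝ, 1 ≤ p → p < 4 →
      (∫ x in Set.Ioo (0:ℝ) 1, (∑' n : ℕ, g (n+1) x) ^ p) ≤ M := by
    intro p hp1 hp4'
    have h1 : (∫ x in Set.Ioo (0:ℝ) 1, (∑' n : ℕ, g (n+1) x) ^ p)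
        ≤ ∫ x in Set.Ioo (0:ℝ) 1, (1 + (∑' n : ℕ, g (n+1) x) ^ (4:ℝ)) :=
      setIntegral_mono_on (hmain p hp1 hp4').1 (hconst_int.add hm4') measurableSet_Ioo
        (fun x _ => hdom p hp1 (by linarith) _ (hnonneg_h x))
    have h2 : (∫ x in Set.Ioo (0:ℝ) 1, (1 + (∑' n : ℕ, g (n+1) x) ^ (4:ℝ))) = M := by
      rw [integral_add hconst_int hm4', hint_one, hMdef]
    linarith
  set t₀ : ℝ := min ((C₁ / (2*M))^(4:ℕ)) 1 with ht₀def
  have hquot_pos : 0 < C₁ / (2*M) := div_pos hC₁pos (by linarith)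
  have ht₀pos : 0 < t₀ := lt_min (by positivity) one_pos
  have ht₀le1 : t₀ ≤ 1 := min_le_right _ _
  have hp1' : (1:ℝ) ≤ 4 - t₀ := by linarith
  have hp4'' : (4:ℝ) - t₀ < 4 := by linarith
  have hk := (key (4 - t₀) hp1' hp4'').1
  rw [show (4:ℝ) - (4 - t₀) = t₀ by ring] at hk
  have hIpos : 0 ≤ ∫ x in Set.Ioo (0:ℝ) 1, (∑' n : ℕ, g (n+1) x) ^ (4 - t₀) :=
    setIntegral_nonneg measurableSet_Ioo (fun x _ => Real.rpow_nonneg (hnonneg_h x) _)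
  have hup : (∫ x in Set.Ioo (0:ℝ) 1, (∑' n : ℕ, g (n+1) x) ^ (4 - t₀)) ^ (1/(4 - t₀)) ≤ M := by
    have h7 := Real.rpow_le_rpow hIpos (hple (4 - t₀) hp1' hp4'')
      (by positivity : (0:ℝ) ≤ 1/(4 - t₀))
    have h8 : M ^ ((1:ℝ)/(4 - t₀)) ≤ M := by
      have h9 : (1:ℝ)/(4 - t₀) ≤ 1 := by
        rw [div_le_one (by linarith)]; linarith
      have := Real.rpow_le_rpow_of_exponent_le hM1 h9
      rwa [Real.rpow_one] at this
    exact h7.trans h8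
  have hfinal : C₁ * t₀ ^ (-(1:ℝ)/4) ≤ M := hk.trans hup
  have h4 : t₀ ^ ((1:ℝ)/4) ≤ C₁/(2*M) := by
    have h5 : t₀ ^ ((1:ℝ)/4) ≤ ((C₁/(2*M))^(4:ℕ)) ^ ((1:ℝ)/4) :=
      Real.rpow_le_rpow ht₀pos.le (min_le_left _ _) (by norm_num)
    have h6 : ((C₁/(2*M))^(4:ℕ)) ^ ((1:ℝ)/4) = C₁/(2*M) := by
      rw [← Real.rpow_natCast (C₁/(2*M)) 4, ← Real.rpow_mul hquot_pos.le]
      norm_num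
    linarith
  have hmul : C₁ = (C₁ * t₀ ^ (-(1:ℝ)/4)) * t₀ ^ ((1:ℝ)/4) := by
    rw [mul_assoc, ← Real.rpow_add ht₀pos]
    norm_num
  have hle : C₁ ≤ M * (C₁/(2*M)) := by
    calc C₁ = (C₁ * t₀ ^ (-(1:ℝ)/4)) * t₀ ^ ((1:ℝ)/4) := hmul
      _ ≤ M * (C₁/(2*M)) :=
          mul_le_mul hfinal h4 (Real.rpow_nonneg ht₀pos.le _) (by linarith)
  have heq2 : M * (C₁/(2*M)) = C₁/2 := by
    field_simp
  rw [heq2] at hle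
  linarith
end

section
/- There exists a sequence (g_n) of random variables on ((0,1), Lebesgue) such that: (i) sup_n ‖g_n‖_4 < ∞; (ii) g_n → 0 a.e. (so the process θ(1/n) = g_n, θ(0) = 0 is a.e. continuous on the compact set T = {1/n} ∪ {0}); but (iii) sup_n |g_n| ∉ L^4, and indeed ‖sup_n |g_n|‖_p ≍ (4-p)^{-1/4} as p → 4⁻. -/
open MeasureTheory ENNReal

namespace Stmt11Aux

noncomputable def aa (n : ℕ) : ℝ := (2:ℝ)⁻¹ ^ n

lemma aa_pos (n : ℕ) : 0 < aa n := by simp only [aa]; positivity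

lemma aa_succ (n : ℕ) : aa (n+1) = aa n * 2⁻¹ := pow_succ _ _

lemma aa_succ_lt (n : ℕ) : aa (n+1) < aa n := by
  have := aa_pos n; rw [aa_succ]; linarith

lemma aa_zero : aa 0 = 1 := by simp [aa]

lemma aa_tendsto : Filter.Tendsto aa Filter.atTop (nhds 0) :=
  tendsto_pow_atTop_nhds_zero_of_lt_one (by norm_num) (by norm_num)

noncomputable def gg (n : ℕ) : ℝ → ℝ :=
  (Set.Ioo (aa (n+1)) (aa n)).indicator fun x => x ^ (-(1/4) : ℝ)

lemma gg_meas (n : ℕ) : Measurable (gg n) :=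
  Measurable.indicator (by fun_prop) measurableSet_Ioo

lemma gg_abs_le {x : ℝ} (hx : 0 < x) (n : ℕ) : |gg n x| ≤ x ^ (-(1/4) : ℝ) := by
  unfold gg
  by_cases h : x ∈ Set.Ioo (aa (n+1)) (aa n)
  · rw [Set.indicator_of_mem h, abs_of_nonneg (Real.rpow_nonneg hx.le _)]
  · rw [Set.indicator_of_notMem h]
    simpa using Real.rpow_nonneg hx.le _

lemma exists_mem {x : ℝ} (hx : x ∈ Set.Ioo (0:ℝ) 1) (hx' : x ∉ Set.range aa) :
    ∃ n, x ∈ Set.Ioo (aa (n+1)) (aa n) := by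
  classical
  have hP : ∃ n, aa n ≤ x := by
    obtain ⟨n, hn⟩ := (aa_tendsto.eventually_lt_const hx.1).exists
    exact ⟨n, hn.le⟩
  have hN : aa (Nat.find hP) ≤ x := Nat.find_spec hP
  have hN0 : Nat.find hP ≠ 0 := by
    intro h
    rw [h, aa_zero] at hN
    exact absurd hN (not_le.2 hx.2)
  obtain ⟨m, hm⟩ := Nat.exists_eq_succ_of_ne_zero hN0
  refine ⟨m, ?_, ?_⟩
  · have hne : aa (Nat.find hP) ≠ x := fun h => hx' ⟨_, h⟩
    rw [hm] at hN hne
    exact lt_of_le_of_ne hN hne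
  · exact not_le.1 (Nat.find_min hP (by omega))

lemma sup_eq {x : ℝ} (hx : x ∈ Set.Ioo (0:ℝ) 1) (hx' : x ∉ Set.range aa) :
    (⨆ n, |gg n x|) = x ^ (-(1/4) : ℝ) := by
  obtain ⟨m, hm⟩ := exists_mem hx hx'
  have hb : ∀ n, |gg n x| ≤ x ^ (-(1/4):ℝ) := gg_abs_le hx.1
  refine le_antisymm (ciSup_le hb) ?_
  have heq : |gg m x| = x ^ (-(1/4):ℝ) := by
    rw [gg, Set.indicator_of_mem hm, abs_of_nonneg (Real.rpow_nonneg hx.1.le _)]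
  calc x ^ (-(1/4):ℝ) = |gg m x| := heq.symm
    _ ≤ ⨆ n, |gg n x| := le_ciSup ⟨x ^ (-(1/4):ℝ), by rintro y ⟨n, rfl⟩; exact hb n⟩ m

lemma sup_ae : (fun x => ⨆ n, |gg n x|)
    =ᵐ[volume.restrict (Set.Ioo (0:ℝ) 1)] (fun x : ℝ => x ^ (-(1/4):ℝ)) := by
  have h2 : ∀ᵐ x ∂(volume : Measure ℝ), x ∉ Set.range aa :=
    measure_eq_zero_iff_ae_notMem.mp ((Set.countable_range aa).measure_zero _)
  filter_upwards [ae_restrict_mem measurableSet_Ioo, ae_restrict_of_ae h2] with x hx hx'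
  exact sup_eq hx hx'

lemma elp_h (p : ℝ) (hp1 : 1 ≤ p) (hp4 : p < 4) :
    eLpNorm (fun x : ℝ => x ^ (-(1/4):ℝ)) (ENNReal.ofReal p)
      (volume.restrict (Set.Ioo (0:ℝ) 1)) = ENNReal.ofReal ((4/(4-p)) ^ (1/p)) := by
  have hp0 : 0 < p := by linarith
  have ht : 0 < 4 - p := by linarith
  have hq0 : ENNReal.ofReal p ≠ 0 := by
    simp only [ne_eq, ENNReal.ofReal_eq_zero, not_le]; linarith
  rw [eLpNorm_eq_lintegral_rpow_enorm_toReal hq0 ENNReal.ofReal_ne_top,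
    ENNReal.toReal_ofReal hp0.le]
  have hr1 : (-1 : ℝ) < -(1/4) * p := by nlinarith
  have key : (∫⁻ x, ‖x ^ (-(1/4):ℝ)‖ₑ ^ p ∂(volume.restrict (Set.Ioo (0:ℝ) 1)))
      = ENNReal.ofReal (4/(4-p)) := by
    rw [setLIntegral_congr_fun measurableSet_Ioo
      (fun x hx => show ‖x ^ (-(1/4):ℝ)‖ₑ ^ p = ENNReal.ofReal (x ^ (-(1/4) * p)) by
        rw [Real.enorm_eq_ofReal (Real.rpow_nonneg hx.1.le _),
          ENNReal.ofReal_rpow_of_pos (Real.rpow_pos_of_pos hx.1 _),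
          ← Real.rpow_mul hx.1.le])]
    have hint : IntegrableOn (fun x : ℝ => x ^ (-(1/4) * p)) (Set.Ioo (0:ℝ) 1) :=
      (intervalIntegral.integrableOn_Ioo_rpow_iff zero_lt_one).2 hr1
    have hnn : 0 ≤ᵐ[volume.restrict (Set.Ioo (0:ℝ) 1)] fun x : ℝ => x ^ (-(1/4) * p) := by
      filter_upwards [ae_restrict_mem measurableSet_Ioo] with x hx
      exact Real.rpow_nonneg hx.1.le _
    rw [← ofReal_integral_eq_lintegral_ofReal hint hnn]
    congr 1
    rw [← integral_Ioc_eq_integral_Ioo, ← intervalIntegral.integral_of_le zero_le_one,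
      integral_rpow (Or.inl hr1), Real.one_rpow,
      Real.zero_rpow (by intro h; nlinarith : -(1/4) * p + 1 ≠ 0)]
    rw [div_eq_div_iff (by nlinarith : (0:ℝ) < -(1/4) * p + 1).ne' ht.ne']
    ring
  rw [key, ENNReal.ofReal_rpow_of_pos (by positivity)]

lemma not_mem_h : ¬ MemLp (fun x : ℝ => x ^ (-(1/4):ℝ)) 4
    (volume.restrict (Set.Ioo (0:ℝ) 1)) := by
  intro h
  have h4 := h.integrable_norm_rpow (by norm_num) (by norm_num)
  have hInt : IntegrableOn (fun x : ℝ => x ^ (-1:ℝ)) (Set.Ioo (0:ℝ) 1) := by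
    refine h4.congr ?_
    filter_upwards [ae_restrict_mem measurableSet_Ioo] with x hx
    rw [Real.norm_eq_abs, abs_of_nonneg (Real.rpow_nonneg hx.1.le _),
      ← Real.rpow_mul hx.1.le]
    norm_num
  have := (intervalIntegral.integrableOn_Ioo_rpow_iff zero_lt_one).1 hInt
  norm_num at this

lemma elp_g_le (n : ℕ) : eLpNorm (gg n) 4 (volume.restrict (Set.Ioo (0:ℝ) 1)) ≤ 1 := by
  set c : ℝ := aa (n+1) ^ (-(1/4):ℝ) with hc
  have hc0 : 0 < c := Real.rpow_pos_of_pos (aa_pos _) _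
  have hmono : ∀ x, ‖gg n x‖ ≤ ‖(Set.Ioo (aa (n+1)) (aa n)).indicator (fun _ => c) x‖ := by
    intro x
    unfold gg
    by_cases h : x ∈ Set.Ioo (aa (n+1)) (aa n)
    · rw [Set.indicator_of_mem h, Set.indicator_of_mem h, Real.norm_eq_abs, Real.norm_eq_abs,
        abs_of_nonneg (Real.rpow_nonneg ((aa_pos _).trans h.1).le _), abs_of_nonneg hc0.le]
      exact Real.rpow_le_rpow_of_nonpos (aa_pos _) h.1.le (by norm_num)
    · simp [Set.indicator_of_notMem h]
  have hmeas : (volume.restrict (Set.Ioo (0:ℝ) 1)) (Set.Ioo (aa (n+1)) (aa n))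
      ≤ ENNReal.ofReal (aa (n+1)) := by
    rw [Measure.restrict_apply measurableSet_Ioo]
    refine le_trans (measure_mono Set.inter_subset_left) ?_
    rw [Real.volume_Ioo]
    have : aa n - aa (n+1) = aa (n+1) := by
      rw [aa_succ]; ring
    rw [this]
  calc eLpNorm (gg n) 4 (volume.restrict (Set.Ioo (0:ℝ) 1))
      ≤ eLpNorm ((Set.Ioo (aa (n+1)) (aa n)).indicator (fun _ => c)) 4
        (volume.restrict (Set.Ioo (0:ℝ) 1)) := eLpNorm_mono hmono
    _ = (‖c‖₊ : ℝ≥0∞) * (volume.restrict (Set.Ioo (0:ℝ) 1)) (Set.Ioo (aa (n+1)) (aa n))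
        ^ (1 / (4:ℝ≥0∞).toReal) :=
        eLpNorm_indicator_const measurableSet_Ioo (by norm_num) (by norm_num)
    _ ≤ (‖c‖₊ : ℝ≥0∞) * (ENNReal.ofReal (aa (n+1))) ^ (1 / (4:ℝ≥0∞).toReal) := by
        gcongr
    _ = 1 := by
        rw [(show (‖c‖₊ : ℝ≥0∞) = ENNReal.ofReal c from Real.enorm_eq_ofReal hc0.le),
          show (1 / (4:ℝ≥0∞).toReal) = ((1:ℝ)/4) by norm_num,
          ENNReal.ofReal_rpow_of_pos (aa_pos _), ← ENNReal.ofReal_mul hc0.le, hc,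
          ← Real.rpow_add (aa_pos _), show (-(1/4) + 1/4 : ℝ) = 0 by norm_num,
          Real.rpow_zero, ENNReal.ofReal_one]

lemma tendsto_gg {x : ℝ} (hx : x ∈ Set.Ioo (0:ℝ) 1) :
    Filter.Tendsto (fun n => gg n x) Filter.atTop (nhds 0) := by
  refine Filter.Tendsto.congr' ?_ tendsto_const_nhds
  filter_upwards [aa_tendsto.eventually_lt_const hx.1] with n hn
  exact (Set.indicator_of_notMem (fun hmem => absurd hmem.2 (not_lt.2 hn.le)) _).symm

lemma key_ineq (p : ℝ) (hp1 : 1 ≤ p) (hp4 : p < 4) :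
    Real.exp (-3) * (4-p) ^ (-(1:ℝ)/4) ≤ (4/(4-p)) ^ (1/p) ∧
    (4/(4-p)) ^ (1/p) ≤ Real.exp 3 * (4-p) ^ (-(1:ℝ)/4) := by
  have ht : 0 < 4 - p := by linarith
  have hp0 : 0 < p := by linarith
  set L := Real.log (4-p) with hL
  have hLle := Real.log_le_sub_one_of_pos ht
  have hLinv := Real.log_le_sub_one_of_pos (inv_pos.2 ht)
  rw [Real.log_inv] at hLinv
  have hinv : (4-p) * (4-p)⁻¹ = 1 := mul_inv_cancel₀ ht.ne'
  have h1 : -1 ≤ (4-p) * L := by nlinarith [mul_le_mul_of_nonneg_left hLinv ht.le]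
  have h2 : (4-p) * L ≤ 6 := by
    rcases le_or_gt (4-p) 1 with h | h
    · have hLnp : L ≤ 0 := Real.log_nonpos (by linarith) h
      nlinarith
    · have h0 : 0 ≤ L := Real.log_nonneg h.le
      nlinarith
  have hlog2 : Real.log 2 ≤ 1 := by
    have := Real.log_le_sub_one_of_pos (by norm_num : (0:ℝ) < 2); linarith
  have hlog4 : Real.log 4 = 2 * Real.log 2 := by
    rw [show (4:ℝ) = 2^2 by norm_num, Real.log_pow]; push_cast; ring
  have hlog4' : 0 ≤ Real.log 4 := Real.log_nonneg (by norm_num)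
  rw [Real.rpow_def_of_pos ht, Real.rpow_def_of_pos (by positivity : (0:ℝ) < 4/(4-p)),
    Real.log_div (by norm_num) ht.ne', ← Real.exp_add, ← Real.exp_add, ← hL]
  constructor
  · rw [Real.exp_le_exp, mul_one_div, le_div_iff₀ hp0]
    nlinarith
  · rw [Real.exp_le_exp, mul_one_div, div_le_iff₀ hp0]
    nlinarith

end Stmt11Aux

open Stmt11Aux in
/-- Main counterexample: a sequence `(g_n)` on `((0,1), Lebesgue)` bounded in
`L⁴`, with `g_n → 0` a.e., but `sup_n |g_n| ∉ L⁴`; indeed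
`‖sup_n |g_n|‖_p ≍ (4-p)^{-1/4}` as `p → 4⁻`. -/
theorem stmt_11 :
    ∃ g : ℕ → ℝ → ℝ,
      (∀ n, Measurable (g n)) ∧
      (⨆ n, eLpNorm (g n) 4 (volume.restrict (Set.Ioo (0 : ℝ) 1))) < ⊤ ∧
      (∀ᵐ x ∂(volume.restrict (Set.Ioo (0 : ℝ) 1)),
        Filter.Tendsto (fun n => g n x) Filter.atTop (nhds 0)) ∧
      ¬ MemLp (fun x => ⨆ n, |g n x|) 4 (volume.restrict (Set.Ioo (0 : ℝ) 1)) ∧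
      ∃ C₁ C₂ : ℝ, 0 < C₁ ∧ C₁ ≤ C₂ ∧
        ∀ p ∈ Set.Ico (1 : ℝ) 4,
          ENNReal.ofReal (C₁ * (4 - p) ^ (-(1 : ℝ) / 4))
              ≤ eLpNorm (fun x => ⨆ n, |g n x|) (ENNReal.ofReal p)
                  (volume.restrict (Set.Ioo (0 : ℝ) 1)) ∧
          eLpNorm (fun x => ⨆ n, |g n x|) (ENNReal.ofReal p)
              (volume.restrict (Set.Ioo (0 : ℝ) 1))
            ≤ ENNReal.ofReal (C₂ * (4 - p) ^ (-(1 : ℝ) / 4)) := by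
  refine ⟨gg, gg_meas, ?_, ?_, ?_, Real.exp (-3), Real.exp 3, Real.exp_pos _,
    Real.exp_le_exp.2 (by norm_num), ?_⟩
  · exact lt_of_le_of_lt (iSup_le elp_g_le) ENNReal.one_lt_top
  · filter_upwards [ae_restrict_mem measurableSet_Ioo] with x hx
    exact tendsto_gg hx
  · intro h
    exact not_mem_h (h.ae_eq sup_ae)
  · intro p hp
    rw [eLpNorm_congr_ae sup_ae, elp_h p hp.1 hp.2]
    obtain ⟨k1, k2⟩ := key_ineq p hp.1 hp.2
    exact ⟨ENNReal.ofReal_le_ofReal k1, ENNReal.ofReal_le_ofReal k2⟩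
end
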